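/- Let P be the probability measure on ℕ with P({n}) = 1/2^n. For every integer n ≥ 4, any optimal set of n-means must contain the set {1, 2, …, n−3}. -/
import Mathlib

open Finset Filter Topology

/-- Distortion error of a nonempty finite set α for the measure P({n}) = 1/2^n, n ≥ 1. -/
noncomputable def errG (α : Finset ℝ) (h : α.Nonempty) : ℝ :=
  ∑' n : ℕ, (1/2^(n+1) : ℝ) * α.inf' h (fun a => ((n+1 : ℝ) - a)^2)

noncomputable def d2 (t : ℝ) (α : Finset ℝ) (h : α.Nonempty) : ℝ :=
  α.inf' h (fun a => (t - a)^2)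

lemma d2_nonneg (t : ℝ) (α : Finset ℝ) (h : α.Nonempty) : 0 ≤ d2 t α h :=
  Finset.le_inf' h _ fun _ _ => sq_nonneg _

lemma d2_le (t : ℝ) {α : Finset ℝ} (h : α.Nonempty) {b : ℝ} (hb : b ∈ α) :
    d2 t α h ≤ (t - b)^2 := Finset.inf'_le _ hb

lemma d2_exists (t : ℝ) (α : Finset ℝ) (h : α.Nonempty) :
    ∃ b ∈ α, d2 t α h = (t - b)^2 := by
  obtain ⟨b, hb, he⟩ := Finset.exists_mem_eq_inf' h (fun a => (t - a)^2)
  exact ⟨b, hb, he⟩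

lemma summable_quad (a b c : ℝ) :
    Summable (fun m : ℕ => (a*(m:ℝ)^2 + b*(m:ℝ) + c) * (1/2:ℝ)^m) := by
  have hr : ‖(1/2 : ℝ)‖ < 1 := by rw [Real.norm_eq_abs]; rw [abs_of_pos]; all_goals norm_num
  have h2 := summable_pow_mul_geometric_of_norm_lt_one (R := ℝ) 2 hr
  have h1 := summable_pow_mul_geometric_of_norm_lt_one (R := ℝ) 1 hr
  have h0 := summable_pow_mul_geometric_of_norm_lt_one (R := ℝ) 0 hr
  have := ((h2.mul_left a).add ((h1.mul_left b).add (h0.mul_left c)))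
  exact this.congr (fun m => by push_cast; ring)

lemma summable_geom_sq (c : ℝ) :
    Summable (fun m : ℕ => (1/2:ℝ)^m * ((m:ℝ) - c)^2) :=
  (summable_quad 1 (-2*c) (c^2)).congr (fun m => by ring)

lemma tail_tsum : ∑' m : ℕ, ((m:ℝ) - 1)^2 * (1/2:ℝ)^m = 4 := by
  have hs : Summable (fun m : ℕ => ((m:ℝ) - 1)^2 * (1/2:ℝ)^m) :=
    (summable_geom_sq 1).congr (fun m => by ring)
  have hf : Summable (fun m : ℕ => (2*(m:ℝ)^2 + 0*(m:ℝ) + 4) * (1/2:ℝ)^m) :=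
    summable_quad 2 0 4
  have htend : Tendsto (fun m : ℕ => (2*(m:ℝ)^2 + 0*(m:ℝ) + 4) * (1/2:ℝ)^m) atTop (𝓝 0) :=
    hf.tendsto_atTop_zero
  have hHS : HasSum (fun m : ℕ => ((m:ℝ) - 1)^2 * (1/2:ℝ)^m) 4 := by
    rw [hasSum_iff_tendsto_nat_of_nonneg
      (fun i => mul_nonneg (sq_nonneg _) (by positivity)) 4]
    set f : ℕ → ℝ := fun m : ℕ => (2*(m:ℝ)^2 + 0*(m:ℝ) + 4) * (1/2:ℝ)^m with hfdef
    have heq : ∀ N : ℕ, ∑ i ∈ Finset.range N, ((i:ℝ) - 1)^2 * (1/2:ℝ)^i = f 0 - f N := by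
      intro N
      rw [← Finset.sum_range_sub' f N]
      exact Finset.sum_congr rfl (fun i _ => by simp only [hfdef]; push_cast [pow_succ]; ring)
    simp only [heq]
    have hten2 : Tendsto (fun N : ℕ => f 0 - f N) atTop (𝓝 (f 0 - 0)) :=
      tendsto_const_nhds.sub htend
    have hf0 : f 0 - 0 = 4 := by simp [hfdef]
    rwa [hf0] at hten2
  exact hHS.tsum_eq

lemma voronoi_interval {a b x y t : ℝ} (hx : (x-a)^2 ≤ (x-b)^2) (hy : (y-a)^2 ≤ (y-b)^2)
    (h1 : x ≤ t) (h2 : t ≤ y) : (t-a)^2 ≤ (t-b)^2 := by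
  rcases eq_or_lt_of_le (h1.trans h2) with heq | hlt
  · have ht : t = x := le_antisymm (heq ▸ h2) h1
    rwa [ht]
  · nlinarith [mul_nonneg (sub_nonneg.2 h2) (sub_nonneg.2 hx),
      mul_nonneg (sub_nonneg.2 h1) (sub_nonneg.2 hy)]

lemma merge_bound (k : ℕ) (u : ℝ) :
    (1/2:ℝ)^(k+1) * (1/3) ≤
      (1/2:ℝ)^(k+1) * (((k:ℝ)+1) - u)^2 + (1/2:ℝ)^(k+2) * (((k:ℝ)+2) - u)^2 := by
  have hw : (0:ℝ) < (1/2:ℝ)^(k+1) := by positivity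
  have hk : (1/2:ℝ)^(k+2) = (1/2:ℝ)^(k+1) * (1/2) := by rw [pow_succ]
  rw [hk]
  nlinarith [mul_nonneg hw.le (sq_nonneg (u - (k:ℝ) - 1 - 1/3))]

lemma terms_summable (α : Finset ℝ) (h : α.Nonempty) :
    Summable (fun m : ℕ => (1/2:ℝ)^(m+1) * d2 ((m:ℝ)+1) α h) := by
  obtain ⟨a0, ha0⟩ := h
  have hmaj : Summable (fun m : ℕ => (1/2:ℝ)^(m+1) * (((m:ℝ)+1) - a0)^2) := by
    have := (summable_nat_add_iff
      (f := fun m : ℕ => (1/2:ℝ)^m * ((m:ℝ) - a0)^2) 1).2 (summable_geom_sq a0)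
    exact this.congr (fun m => by push_cast; ring)
  exact Summable.of_nonneg_of_le (fun m => mul_nonneg (by positivity) (d2_nonneg _ _ _))
    (fun m => mul_le_mul_of_nonneg_left (d2_le _ _ ha0) (by positivity)) hmaj

lemma errG_eq (α : Finset ℝ) (h : α.Nonempty) :
    errG α h = ∑' m : ℕ, (1/2:ℝ)^(m+1) * d2 ((m:ℝ)+1) α h := by
  unfold errG d2
  exact tsum_congr fun m => by rw [one_div_pow]

lemma errG_nonneg (α : Finset ℝ) (h : α.Nonempty) : 0 ≤ errG α h := by
  rw [errG_eq]
  exact tsum_nonneg (fun m => mul_nonneg (by positivity) (d2_nonneg _ _ _))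

lemma beta_bound (p : ℕ) :
    ∃ (β : Finset ℝ) (hβ : β.Nonempty), β.card ≤ p + 4 ∧
      errG β hβ ≤ (8/3) * (1/2:ℝ)^(p+4) := by
  set c1 : ℝ := (p:ℝ) + 10/3 with hc1def
  set c2 : ℝ := (p:ℝ) + 6 with hc2def
  set β := (Finset.Icc 1 (p+2)).image (fun i : ℕ => (i:ℝ)) ∪ {c1, c2} with hβdef
  have hc2 : c2 ∈ β := by
    apply Finset.mem_union_right; simp
  have hc1 : c1 ∈ β := by
    apply Finset.mem_union_right; simp
  have hβne : β.Nonempty := ⟨c2, hc2⟩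
  have hcard : β.card ≤ p + 4 := by
    calc β.card ≤ ((Finset.Icc 1 (p+2)).image (fun i : ℕ => (i:ℝ))).card + ({c1, c2} : Finset ℝ).card :=
          Finset.card_union_le _ _
    _ ≤ (Finset.Icc 1 (p+2)).card + 2 := by
        gcongr
        · exact Finset.card_image_le
        · exact Finset.card_insert_le _ _ |>.trans (by simp)
    _ ≤ p + 4 := by rw [Nat.card_Icc]; omega
  have hmem : ∀ t : ℕ, 1 ≤ t → t ≤ p+2 → ((t:ℝ)) ∈ β := by
    intro t h1 h2
    apply Finset.mem_union_left
    exact Finset.mem_image_of_mem _ (Finset.mem_Icc.2 ⟨h1, h2⟩)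
  refine ⟨β, hβne, hcard, ?_⟩
  rw [errG_eq]
  have hsum := terms_summable β hβne
  rw [← Summable.sum_add_tsum_nat_add (p+4) hsum]
  have hfin : ∑ m ∈ Finset.range (p+4), (1/2:ℝ)^(m+1) * d2 ((m:ℝ)+1) β hβne
      ≤ (2/3) * (1/2:ℝ)^(p+4) := by
    have hp4 : p + 4 = (p+2) + 1 + 1 := by omega
    rw [hp4, Finset.sum_range_succ, Finset.sum_range_succ]
    have hzero : ∑ m ∈ Finset.range (p+2), (1/2:ℝ)^(m+1) * d2 ((m:ℝ)+1) β hβne = 0 := by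
      apply Finset.sum_eq_zero
      intro m hm
      have hmm : ((m:ℝ)+1) ∈ β := by
        have := hmem (m+1) (by omega) (by have := Finset.mem_range.1 hm; omega)
        push_cast at this; exact this
      have h1 : d2 ((m:ℝ)+1) β hβne ≤ 0 := by
        have := d2_le ((m:ℝ)+1) hβne hmm; simpa using this
      have h2 := d2_nonneg ((m:ℝ)+1) β hβne
      rw [le_antisymm h1 h2, mul_zero]
    rw [hzero, zero_add]
    have hb1 : d2 (((p+2:ℕ):ℝ)+1) β hβne ≤ 1/9 := by
      have := d2_le (((p+2:ℕ):ℝ)+1) hβne hc1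
      calc d2 (((p+2:ℕ):ℝ)+1) β hβne ≤ ((((p+2:ℕ):ℝ)+1) - c1)^2 := this
      _ = 1/9 := by rw [hc1def]; push_cast; ring
    have hb2 : d2 (((p+3:ℕ):ℝ)+1) β hβne ≤ 4/9 := by
      have := d2_le (((p+3:ℕ):ℝ)+1) hβne hc1
      calc d2 (((p+3:ℕ):ℝ)+1) β hβne ≤ ((((p+3:ℕ):ℝ)+1) - c1)^2 := this
      _ = 4/9 := by rw [hc1def]; push_cast; ring
    rw [show p+2+1+1 = p+3+1 by omega]
    have hpow : (1/2:ℝ)^(p+2+1) = 2 * (1/2:ℝ)^(p+3+1) := by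
      rw [show p+3+1 = (p+2+1)+1 by omega, pow_succ]; ring
    have t1 : (1/2:ℝ)^(p+2+1) * d2 (((p+2:ℕ):ℝ)+1) β hβne ≤ (1/2:ℝ)^(p+2+1) * (1/9) :=
      mul_le_mul_of_nonneg_left hb1 (by positivity)
    have t2 : (1/2:ℝ)^(p+3+1) * d2 (((p+3:ℕ):ℝ)+1) β hβne ≤ (1/2:ℝ)^(p+3+1) * (4/9) :=
      mul_le_mul_of_nonneg_left hb2 (by positivity)
    rw [hpow] at t1 ⊢
    have hwpos : (0:ℝ) < (1/2:ℝ)^(p+3+1) := by positivity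
    linarith
  have htail : ∑' m : ℕ, (1/2:ℝ)^((m+(p+4))+1) * d2 (((m+(p+4):ℕ):ℝ)+1) β hβne
      ≤ 2 * (1/2:ℝ)^(p+4) := by
    have hmaj : Summable (fun m : ℕ => (1/2:ℝ)^(p+5) * (((m:ℝ)-1)^2 * (1/2:ℝ)^m)) := by
      apply Summable.mul_left
      exact (summable_geom_sq 1).congr (fun m => by ring)
    have hlhs : Summable (fun m : ℕ => (1/2:ℝ)^((m+(p+4))+1) * d2 (((m+(p+4):ℕ):ℝ)+1) β hβne) := by
      have := (summable_nat_add_iff (p+4)).2 hsum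
      exact this.congr (fun m => by push_cast; norm_num)
    have hle : ∀ m : ℕ, (1/2:ℝ)^((m+(p+4))+1) * d2 (((m+(p+4):ℕ):ℝ)+1) β hβne
        ≤ (1/2:ℝ)^(p+5) * (((m:ℝ)-1)^2 * (1/2:ℝ)^m) := by
      intro m
      have hd : d2 (((m+(p+4):ℕ):ℝ)+1) β hβne ≤ ((m:ℝ)-1)^2 := by
        have := d2_le (((m+(p+4):ℕ):ℝ)+1) hβne hc2
        calc d2 (((m+(p+4):ℕ):ℝ)+1) β hβne ≤ ((((m+(p+4):ℕ):ℝ)+1) - c2)^2 := this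
        _ = ((m:ℝ)-1)^2 := by rw [hc2def]; push_cast; ring
      have hww : (1/2:ℝ)^((m+(p+4))+1) = (1/2:ℝ)^(p+5) * (1/2:ℝ)^m := by
        rw [← pow_add]; congr 1; omega
      rw [hww, mul_assoc]
      apply mul_le_mul_of_nonneg_left _ (by positivity)
      rw [mul_comm]
      exact mul_le_mul_of_nonneg_right hd (by positivity)
    calc ∑' m : ℕ, (1/2:ℝ)^((m+(p+4))+1) * d2 (((m+(p+4):ℕ):ℝ)+1) β hβne
        ≤ ∑' m : ℕ, (1/2:ℝ)^(p+5) * (((m:ℝ)-1)^2 * (1/2:ℝ)^m) := Summable.tsum_le_tsum hle hlhs hmaj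
    _ = (1/2:ℝ)^(p+5) * ∑' m : ℕ, (((m:ℝ)-1)^2 * (1/2:ℝ)^m) := tsum_mul_left
    _ = (1/2:ℝ)^(p+5) * 4 := by rw [tail_tsum]
    _ = 2 * (1/2:ℝ)^(p+4) := by rw [pow_succ]; ring
  calc ∑ m ∈ Finset.range (p+4), (1/2:ℝ)^(m+1) * d2 ((m:ℝ)+1) β hβne
        + ∑' m : ℕ, (1/2:ℝ)^((m+(p+4))+1) * d2 (((m+(p+4):ℕ):ℝ)+1) β hβne
      ≤ (2/3) * (1/2:ℝ)^(p+4) + 2 * (1/2:ℝ)^(p+4) := add_le_add hfin htail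
  _ = (8/3) * (1/2:ℝ)^(p+4) := by ring

lemma case_merge (p : ℕ) (α : Finset ℝ) (h : α.Nonempty) (a : ℝ) (haα : a ∈ α)
    (x y : ℕ) (hxy : x < y) (hx1 : 1 ≤ x) (hxp : x ≤ p+1)
    (Hx : ∀ b ∈ α, ((x:ℝ) - a)^2 ≤ ((x:ℝ) - b)^2)
    (Hy : ∀ b ∈ α, ((y:ℝ) - a)^2 ≤ ((y:ℝ) - b)^2) :
    (8/3) * (1/2:ℝ)^(p+4) < errG α h := by
  have hdx : ∀ t : ℕ, x ≤ t → t ≤ y → d2 (t:ℝ) α h = ((t:ℝ) - a)^2 := by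
    intro t h1 h2
    refine le_antisymm (d2_le _ h haα) ?_
    obtain ⟨c, hcα, hceq⟩ := d2_exists (t:ℝ) α h
    rw [hceq]
    exact voronoi_interval (Hx c hcα) (Hy c hcα)
      (by exact_mod_cast h1) (by exact_mod_cast h2)
  obtain ⟨q, rfl⟩ : ∃ q, x = q + 1 := ⟨x - 1, by omega⟩
  have hd1 : d2 ((q:ℝ)+1) α h = ((q:ℝ)+1 - a)^2 := by
    have := hdx (q+1) le_rfl hxy.le
    push_cast at this; convert this using 2 <;> push_cast <;> ring
  have hd2' : d2 ((q:ℝ)+2) α h = ((q:ℝ)+2 - a)^2 := by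
    have := hdx (q+2) (by omega) (by omega)
    push_cast at this; convert this using 2 <;> push_cast <;> ring
  obtain ⟨M, hM⟩ := exists_nat_gt (α.max' h)
  set T := max M (p+3) with hTdef
  have hTM : (α.max' h : ℝ) < (T:ℝ) := by
    refine lt_of_lt_of_le hM ?_
    exact_mod_cast le_max_left M (p+3)
  have hTp : p + 3 ≤ T := le_max_right _ _
  obtain ⟨s, hs⟩ : ∃ s, T = s + 1 := ⟨T - 1, by omega⟩
  have hsq : q + 1 < s := by omega
  set f : ℕ → ℝ := fun m => (1/2:ℝ)^(m+1) * d2 ((m:ℝ)+1) α h with hfdef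
  have hF : f q + f (q+1) + f s ≤ errG α h := by
    rw [errG_eq]
    have : f q + f (q+1) + f s = ∑ m ∈ ({q, q+1, s} : Finset ℕ), f m := by
      rw [Finset.sum_insert (by simp; omega), Finset.sum_insert (by simp; omega),
        Finset.sum_singleton]
      ring
    rw [this]
    exact Summable.sum_le_tsum _ (fun m _ => mul_nonneg (by positivity) (d2_nonneg _ _ _))
      (terms_summable α h)
  have hmerge : (1/2:ℝ)^(q+1) * (1/3) ≤ f q + f (q+1) := by
    have := merge_bound q a
    have e1 : f q = (1/2:ℝ)^(q+1) * (((q:ℝ)+1) - a)^2 := by rw [hfdef]; simp only; rw [hd1]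
    have e2 : f (q+1) = (1/2:ℝ)^(q+2) * (((q:ℝ)+2) - a)^2 := by
      rw [hfdef]; simp only
      have : ((q+1:ℕ):ℝ) + 1 = (q:ℝ)+2 := by push_cast; ring
      rw [this, hd2']
    rw [e1, e2]
    exact this
  have hfs : 0 < f s := by
    have hA : d2 ((s:ℝ)+1) α h ≥ ((s:ℝ)+1 - (α.max' h))^2 := by
      apply Finset.le_inf' h
      intro b hb
      have hbA : b ≤ α.max' h := Finset.le_max' α b hb
      have hTs : (α.max' h : ℝ) < (s:ℝ)+1 := by
        rw [hs] at hTM; push_cast at hTM; linarith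
      nlinarith
    have hpos : (0:ℝ) < ((s:ℝ)+1 - (α.max' h))^2 := by
      have hTs : (α.max' h : ℝ) < (s:ℝ)+1 := by
        rw [hs] at hTM; push_cast at hTM; linarith
      have : (s:ℝ)+1 - (α.max' h) ≠ 0 := by linarith
      positivity
    have : (0:ℝ) < (1/2:ℝ)^(s+1) := by positivity
    calc (0:ℝ) < (1/2:ℝ)^(s+1) * ((s:ℝ)+1 - (α.max' h))^2 := by positivity
    _ ≤ f s := by rw [hfdef]; exact mul_le_mul_of_nonneg_left hA (by positivity)
  have hql : (1/2:ℝ)^(p+1) ≤ (1/2:ℝ)^(q+1) :=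
    pow_le_pow_of_le_one (by norm_num) (by norm_num) (by omega)
  have hp8 : (1/2:ℝ)^(p+4) = (1/2:ℝ)^(p+1) * (1/8) := by
    rw [show p+4 = (p+1)+3 by omega, pow_add ((1/2:ℝ)) (p+1) 3]; norm_num
  have : (8/3) * (1/2:ℝ)^(p+4) ≤ (1/2:ℝ)^(q+1) * (1/3) := by
    rw [hp8]; linarith
  linarith

/-- Any optimal set of n-means (n ≥ 4) contains {1, 2, …, n−3}. -/
theorem stmt14 (n : ℕ) (hn : 4 ≤ n) (α : Finset ℝ) (h : α.Nonempty)
    (hcard : α.card ≤ n)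
    (hopt : errG α h =
      sInf {v : ℝ | ∃ (β : Finset ℝ) (hβ : β.Nonempty), β.card ≤ n ∧ v = errG β hβ}) :
    ∀ j ∈ Finset.Icc 1 (n - 3), (j : ℝ) ∈ α := by
  obtain ⟨p, rfl⟩ : ∃ p, n = p + 4 := ⟨n - 4, by omega⟩
  intro j hj
  rw [Finset.mem_Icc] at hj
  have hj1 : 1 ≤ j := hj.1
  have hjp : j ≤ p + 1 := by omega
  by_contra hja
  have hbdd : BddBelow {v : ℝ | ∃ (β : Finset ℝ) (hβ : β.Nonempty), β.card ≤ p+4 ∧ v = errG β hβ} := by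
    refine ⟨0, fun v hv => ?_⟩
    obtain ⟨β, hβ, _, rfl⟩ := hv
    exact errG_nonneg β hβ
  have hsInf_le : ∀ (β : Finset ℝ) (hβ : β.Nonempty), β.card ≤ p+4 → errG α h ≤ errG β hβ :=
    fun β hβ hc => hopt ▸ csInf_le hbdd ⟨β, hβ, hc, rfl⟩
  obtain ⟨β0, hβ0, hβ0card, hβ0err⟩ := beta_bound p
  have hup : errG α h ≤ (8/3) * (1/2:ℝ)^(p+4) :=
    (hsInf_le β0 hβ0 hβ0card).trans hβ0err
  obtain ⟨a, haα, haeq⟩ := d2_exists (j:ℝ) α h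
  have hd2j_pos : 0 < d2 (j:ℝ) α h := by
    rw [haeq]
    have hne : (j:ℝ) - a ≠ 0 := by
      intro hz
      exact hja (by rw [show (j:ℝ) = a by linarith [sub_eq_zero.1 hz]]; exact haα)
    positivity
  by_cases hB : ∃ m : ℕ, m + 1 ≠ j ∧ ∀ b ∈ α, b ≠ a → d2 ((m:ℝ)+1) α h < ((m:ℝ)+1-b)^2
  · obtain ⟨m, hmj, hma⟩ := hB
    have Hi : ∀ b ∈ α, (((m+1:ℕ):ℝ) - a)^2 ≤ (((m+1:ℕ):ℝ) - b)^2 := by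
      obtain ⟨c, hcα, hceq⟩ := d2_exists ((m:ℝ)+1) α h
      have hca : c = a := by
        by_contra hne
        exact absurd hceq (ne_of_lt (hma c hcα hne))
      intro b hb
      have h1 : d2 ((m:ℝ)+1) α h = ((m:ℝ)+1-a)^2 := by rw [hceq, hca]
      have h2 := d2_le ((m:ℝ)+1) h hb
      rw [h1] at h2
      push_cast
      convert h2 using 2 <;> ring
    have Hj : ∀ b ∈ α, ((j:ℝ) - a)^2 ≤ ((j:ℝ) - b)^2 := by
      intro b hb
      rw [← haeq]
      exact d2_le (j:ℝ) h hb
    rcases lt_or_gt_of_ne hmj with hlt | hgt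
    · exact absurd hup (not_le.2 (case_merge p α h a haα (m+1) j hlt (by omega) (by omega) Hi Hj))
    · exact absurd hup (not_le.2 (case_merge p α h a haα j (m+1) hgt hj1 hjp Hj Hi))
  · push_neg at hB
    set β : Finset ℝ := insert (j:ℝ) (α.erase a) with hβdef
    have hβne : β.Nonempty := Finset.insert_nonempty _ _
    have hβcard : β.card ≤ p + 4 := by
      have h1 : β.card ≤ (α.erase a).card + 1 := Finset.card_insert_le _ _
      have h2 : (α.erase a).card = α.card - 1 := Finset.card_erase_of_mem haα
      have h3 : 1 ≤ α.card := Finset.card_pos.2 h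
      omega
    have hjβ : (j:ℝ) ∈ β := Finset.mem_insert_self _ _
    have hd2jβ : d2 (j:ℝ) β hβne = 0 := by
      refine le_antisymm ?_ (d2_nonneg _ _ _)
      have := d2_le (j:ℝ) hβne hjβ
      simpa using this
    obtain ⟨j', rfl⟩ : ∃ j', j = j' + 1 := ⟨j - 1, by omega⟩
    have hlt : errG β hβne < errG α h := by
      rw [errG_eq, errG_eq]
      refine Summable.tsum_lt_tsum_of_nonneg (i := j')
        (fun m => mul_nonneg (by positivity) (d2_nonneg _ _ _)) ?_ ?_ (terms_summable α h)
      · intro m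
        by_cases hmj : m + 1 = j' + 1
        · have hm : m = j' := by omega
          subst hm
          have hcast : ((m:ℝ)+1) = (((m+1:ℕ)):ℝ) := by push_cast; ring
          rw [hcast, hd2jβ, mul_zero]
          exact mul_nonneg (by positivity) (d2_nonneg _ _ _)
        · obtain ⟨b, hbα, hba, hble⟩ := hB m hmj
          have hbβ : b ∈ β := Finset.mem_insert_of_mem (Finset.mem_erase.2 ⟨hba, hbα⟩)
          have := (d2_le ((m:ℝ)+1) hβne hbβ).trans hble
          exact mul_le_mul_of_nonneg_left this (by positivity)
      · have hcast : ((j':ℝ)+1) = (((j'+1:ℕ)):ℝ) := by push_cast; ring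
        rw [hcast, hd2jβ, mul_zero]
        exact mul_pos (by positivity) (by rw [← hcast] at hd2j_pos ⊢; exact hd2j_pos)
    exact absurd (hsInf_le β hβne hβcard) (not_le.2 hlt)
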